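/- Under the moment assumptions above, if positive and negative pair distributions both satisfy the standardisation/uncorrelation/independence assumptions, then the total expected loss E_{p+}[||P(h-h') + Q(t-t')||^2] - E_{p-}[||P(h-h') + Q(t-t')||^2] equals zero for every choice of matrices P, Q in R^{d×d}. -/

import Mathlib

open MeasureTheory ProbabilityTheory

/-- The standardisation/uncorrelation/independence assumptions on a distribution over
quadruples `(h, t, h', t')` of random vectors in `ℝ^d`. -/
def StdAssumptions {Ω : Type*} [MeasurableSpace Ω] (μ : Measure Ω) {d : ℕ}
    (h t h' t' : Fin d → Ω → ℝ) : Prop :=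
  (∀ i, MemLp (h i) 2 μ) ∧ (∀ i, MemLp (t i) 2 μ) ∧
  (∀ i, MemLp (h' i) 2 μ) ∧ (∀ i, MemLp (t' i) 2 μ) ∧
  (∀ i j, i ≠ j → ∫ ω, h i ω * h j ω ∂μ = 0) ∧
  (∀ i j, i ≠ j → ∫ ω, t i ω * t j ω ∂μ = 0) ∧
  (∀ i j, i ≠ j → ∫ ω, h i ω * t j ω ∂μ = 0) ∧
  (∀ i j, i ≠ j → ∫ ω, h' i ω * h' j ω ∂μ = 0) ∧
  (∀ i j, i ≠ j → ∫ ω, t' i ω * t' j ω ∂μ = 0) ∧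
  (∀ i j, i ≠ j → ∫ ω, h' i ω * t' j ω ∂μ = 0) ∧
  (∀ i, ∫ ω, h i ω ∂μ = 0) ∧ (∀ i, ∫ ω, t i ω ∂μ = 0) ∧
  (∀ i, ∫ ω, h' i ω ∂μ = 0) ∧ (∀ i, ∫ ω, t' i ω ∂μ = 0) ∧
  (∀ i, ∫ ω, h i ω ^ 2 ∂μ = 1) ∧ (∀ i, ∫ ω, t i ω ^ 2 ∂μ = 1) ∧
  (∀ i, ∫ ω, h' i ω ^ 2 ∂μ = 1) ∧ (∀ i, ∫ ω, t' i ω ^ 2 ∂μ = 1) ∧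
  (∀ i, ∫ ω, h i ω * t i ω ∂μ = 1) ∧ (∀ i, ∫ ω, h' i ω * t' i ω ∂μ = 1) ∧
  IndepFun (fun ω => (fun i => h i ω, fun i => t i ω))
    (fun ω => (fun i => h' i ω, fun i => t' i ω)) μ

section Aux

variable {Ω : Type*} [MeasurableSpace Ω] {μ : Measure Ω}

lemma l2_mul_int {f g : Ω → ℝ} (hf : MemLp f 2 μ) (hg : MemLp g 2 μ) :
    Integrable (fun ω => f ω * g ω) μ := by
  have : MemLp (f • g) 1 μ :=
    hg.smul hf
  exact memLp_one_iff_integrable.mp this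

lemma expand4 {f g u v : Ω → ℝ} (hf : MemLp f 2 μ) (hg : MemLp g 2 μ)
    (hu : MemLp u 2 μ) (hv : MemLp v 2 μ) :
    ∫ ω, (f ω - u ω) * (g ω - v ω) ∂μ
      = (∫ ω, f ω * g ω ∂μ) - (∫ ω, f ω * v ω ∂μ)
        - (∫ ω, u ω * g ω ∂μ) + ∫ ω, u ω * v ω ∂μ := by
  have e : (fun ω => (f ω - u ω) * (g ω - v ω))
      = fun ω => f ω * g ω - f ω * v ω - u ω * g ω + u ω * v ω := funext fun ω => by ring
  have I1 : Integrable (fun ω => f ω * g ω) μ := l2_mul_int hf hg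
  have I2 : Integrable (fun ω => f ω * v ω) μ := l2_mul_int hf hv
  have I3 : Integrable (fun ω => u ω * g ω) μ := l2_mul_int hu hg
  have I4 : Integrable (fun ω => u ω * v ω) μ := l2_mul_int hu hv
  have I5 : Integrable (fun ω => f ω * g ω - f ω * v ω) μ := I1.sub I2
  have I6 : Integrable (fun ω => f ω * g ω - f ω * v ω - u ω * g ω) μ := I5.sub I3
  rw [e, integral_add I6 I4, integral_sub I5 I3, integral_sub I1 I2]

lemma key (μ : Measure Ω) [IsProbabilityMeasure μ] {d : ℕ} (h t h' t' : Fin d → Ω → ℝ)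
    (H : StdAssumptions μ h t h' t') (P Q : Matrix (Fin d) (Fin d) ℝ) :
    (∫ ω, ∑ k, (∑ i, P k i * (h i ω - h' i ω) + ∑ i, Q k i * (t i ω - t' i ω)) ^ 2 ∂μ)
      = ∑ k : Fin d, ∑ i : Fin d, 2 * (P k i + Q k i) ^ 2 := by
  obtain ⟨Lh, Lt, Lh', Lt', Chh, Ctt, Cht, Ch'h', Ct't', Ch't', Eh, Et, Eh', Et',
    Vh, Vt, Vh', Vt', Pht, Ph't', Ind⟩ := H
  have mfst : ∀ i : Fin d, Measurable (fun p : (Fin d → ℝ) × (Fin d → ℝ) => p.1 i) :=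
    fun i => (measurable_pi_apply i).comp measurable_fst
  have msnd : ∀ i : Fin d, Measurable (fun p : (Fin d → ℝ) × (Fin d → ℝ) => p.2 i) :=
    fun i => (measurable_pi_apply i).comp measurable_snd
  -- cross (unprimed × primed) expectations vanish by independence
  have iHH' : ∀ i j, ∫ ω, h i ω * h' j ω ∂μ = 0 := fun i j => by
    have hi : IndepFun (h i) (h' j) μ := Ind.comp (mfst i) (mfst j)
    rw [hi.integral_fun_mul_eq_mul_integral (Lh i).aestronglyMeasurable (Lh' j).aestronglyMeasurable, Eh i, zero_mul]
  have iHT' : ∀ i j, ∫ ω, h i ω * t' j ω ∂μ = 0 := fun i j => by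
    have hi : IndepFun (h i) (t' j) μ := Ind.comp (mfst i) (msnd j)
    rw [hi.integral_fun_mul_eq_mul_integral (Lh i).aestronglyMeasurable (Lt' j).aestronglyMeasurable, Eh i, zero_mul]
  have iTH' : ∀ i j, ∫ ω, t i ω * h' j ω ∂μ = 0 := fun i j => by
    have hi : IndepFun (t i) (h' j) μ := Ind.comp (msnd i) (mfst j)
    rw [hi.integral_fun_mul_eq_mul_integral (Lt i).aestronglyMeasurable (Lh' j).aestronglyMeasurable, Et i, zero_mul]
  have iTT' : ∀ i j, ∫ ω, t i ω * t' j ω ∂μ = 0 := fun i j => by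
    have hi : IndepFun (t i) (t' j) μ := Ind.comp (msnd i) (msnd j)
    rw [hi.integral_fun_mul_eq_mul_integral (Lt i).aestronglyMeasurable (Lt' j).aestronglyMeasurable, Et i, zero_mul]
  -- swapped versions
  have comm : ∀ (a b : Ω → ℝ), (∫ ω, a ω * b ω ∂μ) = ∫ ω, b ω * a ω ∂μ := fun a b => by
    have e : (fun ω => a ω * b ω) = fun ω => b ω * a ω := funext fun ω => mul_comm _ _
    rw [e]
  have iH'H : ∀ i j, ∫ ω, h' i ω * h j ω ∂μ = 0 := fun i j => (comm _ _).trans (iHH' j i)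
  have iH'T : ∀ i j, ∫ ω, h' i ω * t j ω ∂μ = 0 := fun i j => (comm _ _).trans (iTH' j i)
  have iT'H : ∀ i j, ∫ ω, t' i ω * h j ω ∂μ = 0 := fun i j => (comm _ _).trans (iHT' j i)
  have iT'T : ∀ i j, ∫ ω, t' i ω * t j ω ∂μ = 0 := fun i j => (comm _ _).trans (iTT' j i)
  -- second moments within each pair
  have MHH : ∀ i j, ∫ ω, h i ω * h j ω ∂μ = if i = j then 1 else 0 := fun i j => by
    by_cases hij : i = j
    · subst hij; simp only [if_pos rfl]; simpa only [← pow_two, if_true] using Vh i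
    · simp [hij, Chh i j hij]
  have MTT : ∀ i j, ∫ ω, t i ω * t j ω ∂μ = if i = j then 1 else 0 := fun i j => by
    by_cases hij : i = j
    · subst hij; simp only [if_pos rfl]; simpa only [← pow_two, if_true] using Vt i
    · simp [hij, Ctt i j hij]
  have MHT : ∀ i j, ∫ ω, h i ω * t j ω ∂μ = if i = j then 1 else 0 := fun i j => by
    by_cases hij : i = j
    · subst hij; simp only [if_pos rfl]; exact Pht i
    · simp [hij, Cht i j hij]
  have MTH : ∀ i j, ∫ ω, t i ω * h j ω ∂μ = if i = j then 1 else 0 := fun i j => by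
    rw [comm, MHT j i]; simp [eq_comm]
  have MH'H' : ∀ i j, ∫ ω, h' i ω * h' j ω ∂μ = if i = j then 1 else 0 := fun i j => by
    by_cases hij : i = j
    · subst hij; simp only [if_pos rfl]; simpa only [← pow_two, if_true] using Vh' i
    · simp [hij, Ch'h' i j hij]
  have MT'T' : ∀ i j, ∫ ω, t' i ω * t' j ω ∂μ = if i = j then 1 else 0 := fun i j => by
    by_cases hij : i = j
    · subst hij; simp only [if_pos rfl]; simpa only [← pow_two, if_true] using Vt' i
    · simp [hij, Ct't' i j hij]
  have MH'T' : ∀ i j, ∫ ω, h' i ω * t' j ω ∂μ = if i = j then 1 else 0 := fun i j => by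
    by_cases hij : i = j
    · subst hij; simp only [if_pos rfl]; exact Ph't' i
    · simp [hij, Ch't' i j hij]
  have MT'H' : ∀ i j, ∫ ω, t' i ω * h' j ω ∂μ = if i = j then 1 else 0 := fun i j => by
    rw [comm, MH'T' j i]; simp [eq_comm]
  -- second moments of differences
  have MXX : ∀ i j, ∫ ω, (h i ω - h' i ω) * (h j ω - h' j ω) ∂μ
      = if i = j then 2 else 0 := fun i j => by
    rw [expand4 (Lh i) (Lh j) (Lh' i) (Lh' j), MHH i j, iHH' i j, iH'H i j, MH'H' i j]
    by_cases hij : i = j <;> norm_num [hij]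
  have MXY : ∀ i j, ∫ ω, (h i ω - h' i ω) * (t j ω - t' j ω) ∂μ
      = if i = j then 2 else 0 := fun i j => by
    rw [expand4 (Lh i) (Lt j) (Lh' i) (Lt' j), MHT i j, iHT' i j, iH'T i j, MH'T' i j]
    by_cases hij : i = j <;> norm_num [hij]
  have MYX : ∀ i j, ∫ ω, (t i ω - t' i ω) * (h j ω - h' j ω) ∂μ
      = if i = j then 2 else 0 := fun i j => by
    rw [expand4 (Lt i) (Lh j) (Lt' i) (Lh' j), MTH i j, iTH' i j, iT'H i j, MT'H' i j]
    by_cases hij : i = j <;> norm_num [hij]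
  have MYY : ∀ i j, ∫ ω, (t i ω - t' i ω) * (t j ω - t' j ω) ∂μ
      = if i = j then 2 else 0 := fun i j => by
    rw [expand4 (Lt i) (Lt j) (Lt' i) (Lt' j), MTT i j, iTT' i j, iT'T i j, MT'T' i j]
    by_cases hij : i = j <;> norm_num [hij]
  -- the combined coordinate functions
  have Lf : ∀ k i, MemLp (fun ω => P k i * (h i ω - h' i ω) + Q k i * (t i ω - t' i ω)) 2 μ :=
    fun k i => (((Lh i).sub (Lh' i)).const_mul _).add (((Lt i).sub (Lt' i)).const_mul _)
  have Ifg : ∀ k i j, Integrable (fun ω =>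
      (P k i * (h i ω - h' i ω) + Q k i * (t i ω - t' i ω)) *
      (P k j * (h j ω - h' j ω) + Q k j * (t j ω - t' j ω))) μ :=
    fun k i j => l2_mul_int (Lf k i) (Lf k j)
  have Iff : ∀ k i j, ∫ ω, (P k i * (h i ω - h' i ω) + Q k i * (t i ω - t' i ω)) *
      (P k j * (h j ω - h' j ω) + Q k j * (t j ω - t' j ω)) ∂μ
      = if i = j then 2 * (P k i + Q k i) ^ 2 else 0 := fun k i j => by
    have IXX : Integrable (fun ω => (h i ω - h' i ω) * (h j ω - h' j ω)) μ :=
      l2_mul_int ((Lh i).sub (Lh' i)) ((Lh j).sub (Lh' j))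
    have IXY : Integrable (fun ω => (h i ω - h' i ω) * (t j ω - t' j ω)) μ :=
      l2_mul_int ((Lh i).sub (Lh' i)) ((Lt j).sub (Lt' j))
    have IYX : Integrable (fun ω => (t i ω - t' i ω) * (h j ω - h' j ω)) μ :=
      l2_mul_int ((Lt i).sub (Lt' i)) ((Lh j).sub (Lh' j))
    have IYY : Integrable (fun ω => (t i ω - t' i ω) * (t j ω - t' j ω)) μ :=
      l2_mul_int ((Lt i).sub (Lt' i)) ((Lt j).sub (Lt' j))
    have A1 : Integrable (fun ω => P k i * P k j * ((h i ω - h' i ω) * (h j ω - h' j ω))) μ :=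
      IXX.const_mul _
    have A2 : Integrable (fun ω => P k i * Q k j * ((h i ω - h' i ω) * (t j ω - t' j ω))) μ :=
      IXY.const_mul _
    have A3 : Integrable (fun ω => Q k i * P k j * ((t i ω - t' i ω) * (h j ω - h' j ω))) μ :=
      IYX.const_mul _
    have A4 : Integrable (fun ω => Q k i * Q k j * ((t i ω - t' i ω) * (t j ω - t' j ω))) μ :=
      IYY.const_mul _
    have B1 : Integrable (fun ω => P k i * P k j * ((h i ω - h' i ω) * (h j ω - h' j ω))
        + P k i * Q k j * ((h i ω - h' i ω) * (t j ω - t' j ω))) μ := A1.add A2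
    have B2 : Integrable (fun ω => P k i * P k j * ((h i ω - h' i ω) * (h j ω - h' j ω))
        + P k i * Q k j * ((h i ω - h' i ω) * (t j ω - t' j ω))
        + Q k i * P k j * ((t i ω - t' i ω) * (h j ω - h' j ω))) μ := B1.add A3
    have e : (fun ω => (P k i * (h i ω - h' i ω) + Q k i * (t i ω - t' i ω)) *
        (P k j * (h j ω - h' j ω) + Q k j * (t j ω - t' j ω)))
        = fun ω =>
          P k i * P k j * ((h i ω - h' i ω) * (h j ω - h' j ω))
          + P k i * Q k j * ((h i ω - h' i ω) * (t j ω - t' j ω))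
          + Q k i * P k j * ((t i ω - t' i ω) * (h j ω - h' j ω))
          + Q k i * Q k j * ((t i ω - t' i ω) * (t j ω - t' j ω)) := funext fun ω => by ring
    rw [e, integral_add B2 A4, integral_add B1 A3, integral_add A1 A2,
      integral_const_mul, integral_const_mul, integral_const_mul, integral_const_mul,
      MXX i j, MXY i j, MYX i j, MYY i j]
    by_cases hij : i = j
    · subst hij; simp only [eq_self_iff_true, if_true]; ring
    · simp [hij]
  -- now the main computation
  calc (∫ ω, ∑ k, (∑ i, P k i * (h i ω - h' i ω) + ∑ i, Q k i * (t i ω - t' i ω)) ^ 2 ∂μ)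
      = ∫ ω, ∑ k, ∑ i, ∑ j,
          (P k i * (h i ω - h' i ω) + Q k i * (t i ω - t' i ω)) *
          (P k j * (h j ω - h' j ω) + Q k j * (t j ω - t' j ω)) ∂μ := by
        congr 1; funext ω
        refine Finset.sum_congr rfl fun k _ => ?_
        rw [← Finset.sum_add_distrib, sq, Finset.sum_mul_sum]
    _ = ∑ k, ∑ i, ∑ j, ∫ ω,
          (P k i * (h i ω - h' i ω) + Q k i * (t i ω - t' i ω)) *
          (P k j * (h j ω - h' j ω) + Q k j * (t j ω - t' j ω)) ∂μ := by
        rw [integral_finset_sum _ (fun k _ => integrable_finset_sum _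
          (fun i _ => integrable_finset_sum _ (fun j _ => Ifg k i j)))]
        refine Finset.sum_congr rfl fun k _ => ?_
        rw [integral_finset_sum _ (fun i _ => integrable_finset_sum _ (fun j _ => Ifg k i j))]
        exact Finset.sum_congr rfl fun i _ => integral_finset_sum _ fun j _ => Ifg k i j
    _ = ∑ k : Fin d, ∑ i : Fin d, 2 * (P k i + Q k i) ^ 2 := by
        refine Finset.sum_congr rfl fun k _ => Finset.sum_congr rfl fun i _ => ?_
        rw [Finset.sum_congr rfl fun j _ => Iff k i j]
        simp

end Aux

/-- If the positive and negative pair distributions both satisfy the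
standardisation/uncorrelation/independence assumptions, then the total expected loss
`E_{p+}[‖P(h-h') + Q(t-t')‖²] - E_{p-}[‖P(h-h') + Q(t-t')‖²]` is zero for every `P, Q`. -/
theorem stmt_6 {Ω : Type*} [MeasurableSpace Ω] (μp μm : Measure Ω)
    [IsProbabilityMeasure μp] [IsProbabilityMeasure μm]
    {d : ℕ} (h t h' t' : Fin d → Ω → ℝ)
    (hp : StdAssumptions μp h t h' t') (hm : StdAssumptions μm h t h' t')
    (P Q : Matrix (Fin d) (Fin d) ℝ) :
    (∫ ω, ∑ k, (∑ i, P k i * (h i ω - h' i ω) + ∑ i, Q k i * (t i ω - t' i ω)) ^ 2 ∂μp)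
      - (∫ ω, ∑ k, (∑ i, P k i * (h i ω - h' i ω)
          + ∑ i, Q k i * (t i ω - t' i ω)) ^ 2 ∂μm) = 0 := by
  rw [key μp h t h' t' hp P Q, key μm h t h' t' hm P Q, sub_self]
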